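/- Let ℱ be a nonempty closed convex set of free states and 𝔉 a set of channels each of which maps ℱ into ℱ, containing for every σ ∈ ℱ the replacement channel τ ↦ Tr(τ)σ. For the max-relative entropy D_max(ρ,σ) = log₂ inf{λ > 0 : λσ − ρ is positive semidefinite} (with inf ∅ = ∞, so D_max takes values in [0,∞]), the resource generating and increasing powers coincide and admit the max-min characterization: Ω̃_{D_max}(N) = Ω_{D_max}(N) = sup_{ρ∈ℱ} inf_{M∈𝔉} D_max(N(ρ), M(ρ)) for every channel N. -/

import Mathlib

open scoped Kronecker ComplexOrder Classical

variable {ι : Type*} [Fintype ι] [DecidableEq ι]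

/-- A quantum state: positive semidefinite matrix of trace one. -/
def IsState (ρ : Matrix ι ι ℂ) : Prop := ρ.PosSemidef ∧ ρ.trace = 1

/-- The action of `id_n ⊗ N` on block matrices. -/
def idTensorMap (n : ℕ) (N : Matrix ι ι ℂ →ₗ[ℂ] Matrix ι ι ℂ)
    (M : Matrix (Fin n × ι) (Fin n × ι) ℂ) : Matrix (Fin n × ι) (Fin n × ι) ℂ :=
  Matrix.of fun p q => N (Matrix.of fun k l => M (p.1, k) (q.1, l)) p.2 q.2

/-- A quantum channel: completely positive trace preserving linear map. -/
structure Channel (ι : Type*) [Fintype ι] [DecidableEq ι] where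
  map : Matrix ι ι ℂ →ₗ[ℂ] Matrix ι ι ℂ
  cp : ∀ (n : ℕ) (M : Matrix (Fin n × ι) (Fin n × ι) ℂ), M.PosSemidef →
        (idTensorMap n map M).PosSemidef
  tp : ∀ A : Matrix ι ι ℂ, (map A).trace = A.trace

/-- The trace norm ‖A‖₁ = Tr √(AᴴA). -/
noncomputable def traceNorm (A : Matrix ι ι ℂ) : ℝ :=
  ((Matrix.posSemidef_conjTranspose_mul_self A).1.eigenvectorUnitary.1 *
    Matrix.diagonal (fun i : ι =>
      ((Real.sqrt ((Matrix.posSemidef_conjTranspose_mul_self A).1.eigenvalues i) : ℝ) : ℂ)) *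
    (star (Matrix.posSemidef_conjTranspose_mul_self A).1.eigenvectorUnitary : Matrix ι ι ℂ)).trace.re

/-- Trace-norm resource measure ω₁. -/
noncomputable def omega1 (F : Set (Matrix ι ι ℂ)) (ρ : Matrix ι ι ℂ) : ℝ :=
  (1/2) * sInf ((fun σ => traceNorm (ρ - σ)) '' F)

/-- Trace-norm resource generating power Ω₁. -/
noncomputable def genPower1 (F : Set (Matrix ι ι ℂ)) (N : Matrix ι ι ℂ → Matrix ι ι ℂ) : ℝ :=
  sSup ((fun ρ => omega1 F (N ρ)) '' F)

/-- Trace-norm resource increasing power Ω̃₁. -/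
noncomputable def incPower1 (F : Set (Matrix ι ι ℂ)) (N : Matrix ι ι ℂ → Matrix ι ι ℂ) : ℝ :=
  sSup ((fun ρ => omega1 F (N ρ) - omega1 F ρ) '' {ρ | IsState ρ})

/-- Holevo–Helstrom success probability of discriminating two channels with probe `ρ`. -/
noncomputable def psuccPair (N M : Matrix ι ι ℂ → Matrix ι ι ℂ) (ρ : Matrix ι ι ℂ) : ℝ :=
  1/2 + (1/4) * traceNorm (N ρ - M ρ)

/-- Success probability of discriminating `N` from the set of channels `Free` with probe `ρ`. -/
noncomputable def psuccChan (N : Matrix ι ι ℂ → Matrix ι ι ℂ) (Free : Set (Channel ι))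
    (ρ : Matrix ι ι ℂ) : ℝ :=
  sInf ((fun M : Channel ι => psuccPair N (⇑M.map) ρ) '' Free)

/-- Maximum success probability of discriminating `N` from `Free` using probes from `F`. -/
noncomputable def psuccFF (N : Matrix ι ι ℂ → Matrix ι ι ℂ) (Free : Set (Channel ι))
    (F : Set (Matrix ι ι ℂ)) : ℝ :=
  sSup ((fun ρ => psuccChan N Free ρ) '' F)

/-- The max-relative entropy `D_max(ρ,σ) = log₂ inf {λ > 0 : λσ - ρ ⪰ 0}`, with `inf ∅ = ∞`. -/

noncomputable def Dmax (ρ σ : Matrix ι ι ℂ) : EReal :=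
  if {t : ℝ | 0 < t ∧ ((t : ℂ) • σ - ρ).PosSemidef}.Nonempty then
    ((Real.logb 2 (sInf {t : ℝ | 0 < t ∧ ((t : ℂ) • σ - ρ).PosSemidef}) : ℝ) : EReal)
  else ⊤

/-- Max-relative entropy resource measure. -/
noncomputable def omegaMax (F : Set (Matrix ι ι ℂ)) (ρ : Matrix ι ι ℂ) : EReal :=
  sInf ((fun σ => Dmax ρ σ) '' F)

/-- Max-relative entropy resource generating power. -/
noncomputable def genPowerMax (F : Set (Matrix ι ι ℂ)) (N : Matrix ι ι ℂ → Matrix ι ι ℂ) :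
    EReal :=
  sSup ((fun ρ => omegaMax F (N ρ)) '' F)

/-- Max-relative entropy resource increasing power. -/
noncomputable def incPowerMax (F : Set (Matrix ι ι ℂ)) (N : Matrix ι ι ℂ → Matrix ι ι ℂ) :
    EReal :=
  sSup ((fun ρ => omegaMax F (N ρ) - omegaMax F ρ) '' {ρ | IsState ρ})


section Stmt10Aux

set_option linter.unusedSectionVars false

open Matrix Real

/-- The set of feasible `λ` in the definition of `Dmax`. -/
noncomputable def lamSet (ρ σ : Matrix ι ι ℂ) : Set ℝ :=
  {t : ℝ | 0 < t ∧ ((t : ℂ) • σ - ρ).PosSemidef}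

lemma Dmax_eq (ρ σ : Matrix ι ι ℂ) :
    Dmax ρ σ = if (lamSet ρ σ).Nonempty then
      ((Real.logb 2 (sInf (lamSet ρ σ)) : ℝ) : EReal) else ⊤ := rfl

lemma psd_smul {A : Matrix ι ι ℂ} (hA : A.PosSemidef) {c : ℝ} (hc : 0 ≤ c) :
    ((c : ℂ) • A).PosSemidef := by
  refine Matrix.PosSemidef.of_dotProduct_mulVec_nonneg ?_ fun x => ?_
  · have h : ((c : ℂ) • A).conjTranspose = star (c : ℂ) • A.conjTranspose :=
      conjTranspose_smul _ _
    rw [Matrix.IsHermitian, h, hA.1.eq]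
    simp [Complex.star_def, Complex.conj_ofReal]
  · rw [smul_mulVec, dotProduct_smul, smul_eq_mul]
    exact mul_nonneg (by simpa using Complex.zero_le_real.mpr hc) (hA.dotProduct_mulVec_nonneg x)

lemma lamSet_subset {ρ σ : Matrix ι ι ℂ} (hρ : IsState ρ) (hσ : IsState σ) :
    lamSet ρ σ ⊆ Set.Ici 1 := by
  rintro t ⟨ht, hpsd⟩
  have h1 : (0 : ℂ) ≤ ((t : ℂ) • σ - ρ).trace := by
    exact Finset.sum_nonneg fun i _ => by
      simpa [Matrix.mulVec_single, dotProduct, Pi.single_apply]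
        using hpsd.dotProduct_mulVec_nonneg (Pi.single i 1)
  rw [Matrix.trace_sub, Matrix.trace_smul, hρ.2, hσ.2, smul_eq_mul, mul_one] at h1
  have h2 : (0 : ℂ) ≤ ((t - 1 : ℝ) : ℂ) := by push_cast; convert h1 using 1
  have h3 := Complex.zero_le_real.mp h2
  simp only [Set.mem_Ici]; linarith

lemma one_le_sInf_lamSet {ρ σ : Matrix ι ι ℂ} (hρ : IsState ρ) (hσ : IsState σ)
    (hne : (lamSet ρ σ).Nonempty) : 1 ≤ sInf (lamSet ρ σ) :=
  le_csInf hne fun _ ht => lamSet_subset hρ hσ ht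

lemma sInf_mem_lamSet {ρ σ : Matrix ι ι ℂ} (hρ : IsState ρ) (hσ : IsState σ)
    (hne : (lamSet ρ σ).Nonempty) : sInf (lamSet ρ σ) ∈ lamSet ρ σ := by
  have h1 : 1 ≤ sInf (lamSet ρ σ) := one_le_sInf_lamSet hρ hσ hne
  set m := sInf (lamSet ρ σ) with hm
  refine ⟨by linarith, Matrix.PosSemidef.of_dotProduct_mulVec_nonneg ?_ fun x => ?_⟩
  · have h : ((m : ℂ) • σ - ρ).conjTranspose
        = star (m : ℂ) • σ.conjTranspose - ρ.conjTranspose := by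
      rw [conjTranspose_sub, conjTranspose_smul]
    rw [Matrix.IsHermitian, h, hσ.1.1.eq, hρ.1.1.eq]
    simp [Complex.star_def, Complex.conj_ofReal]
  · set a := dotProduct (star x) (σ.mulVec x) with hadef
    set b := dotProduct (star x) (ρ.mulVec x) with hbdef
    have ha : 0 ≤ a := hσ.1.dotProduct_mulVec_nonneg x
    have hb : 0 ≤ b := hρ.1.dotProduct_mulVec_nonneg x
    have hquad : ∀ t : ℝ,
        dotProduct (star x) ((((t : ℂ) • σ - ρ)).mulVec x) = (t : ℂ) * a - b := by
      intro t
      rw [Matrix.sub_mulVec, dotProduct_sub, Matrix.smul_mulVec,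
        dotProduct_smul, smul_eq_mul]
    have hkey : ∀ t ∈ lamSet ρ σ, b.re ≤ t * a.re := by
      intro t ht
      have h0 := ht.2.dotProduct_mulVec_nonneg x
      rw [hquad t] at h0
      have hre := (Complex.nonneg_iff.mp h0).1
      simp only [Complex.sub_re, Complex.mul_re, Complex.ofReal_re, Complex.ofReal_im,
        zero_mul, sub_zero] at hre
      linarith
    rw [hquad m, Complex.nonneg_iff]
    have haim : a.im = 0 := (Complex.nonneg_iff.mp ha).2.symm
    have hbim : b.im = 0 := (Complex.nonneg_iff.mp hb).2.symm
    have hare : 0 ≤ a.re := (Complex.nonneg_iff.mp ha).1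
    have hbre : 0 ≤ b.re := (Complex.nonneg_iff.mp hb).1
    constructor
    · simp only [Complex.sub_re, Complex.mul_re, Complex.ofReal_re, Complex.ofReal_im,
        zero_mul, sub_zero]
      rcases eq_or_lt_of_le hare with h0 | h0
      · obtain ⟨t, ht⟩ := hne
        have h2 := hkey t ht
        rw [← h0] at h2 ⊢
        simp only [mul_zero] at h2 ⊢
        linarith
      · have h2 : b.re / a.re ≤ m := le_csInf hne fun t ht => by
          rw [div_le_iff₀ h0]; exact hkey t ht
        rw [div_le_iff₀ h0] at h2
        linarith
    · simp [Complex.sub_im, Complex.mul_im, haim, hbim]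

/-- The obvious equivalence `Fin 1 × ι ≃ ι`. -/
def sndEquiv (ι : Type*) : Fin 1 × ι ≃ ι where
  toFun := Prod.snd
  invFun := fun i => (0, i)
  left_inv := by rintro ⟨a, b⟩; simp [Subsingleton.elim a 0]
  right_inv := fun _ => rfl

lemma channel_psd (N : Channel ι) {A : Matrix ι ι ℂ} (hA : A.PosSemidef) :
    (N.map A).PosSemidef := by
  have hsub : (A.submatrix (sndEquiv ι) (sndEquiv ι)).PosSemidef := hA.submatrix _
  have h := N.cp 1 _ hsub
  have heq : idTensorMap 1 N.map (A.submatrix (sndEquiv ι) (sndEquiv ι))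
      = (N.map A).submatrix (sndEquiv ι) (sndEquiv ι) := rfl
  rw [heq] at h
  exact (Matrix.posSemidef_submatrix_equiv (sndEquiv ι)).mp h

lemma channel_state (N : Channel ι) {ρ : Matrix ι ι ℂ} (hρ : IsState ρ) :
    IsState (N.map ρ) :=
  ⟨channel_psd N hρ.1, by rw [N.tp, hρ.2]⟩

lemma Dmax_nonneg {ρ σ : Matrix ι ι ℂ} (hρ : IsState ρ) (hσ : IsState σ) :
    0 ≤ Dmax ρ σ := by
  rw [Dmax_eq]
  split_ifs with h
  · rw [← EReal.coe_zero, EReal.coe_le_coe_iff]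
    exact Real.logb_nonneg one_lt_two (one_le_sInf_lamSet hρ hσ h)
  · exact le_top

lemma Dmax_self {ρ : Matrix ι ι ℂ} (hρ : IsState ρ) : Dmax ρ ρ = 0 := by
  have h1 : (1 : ℝ) ∈ lamSet ρ ρ := ⟨one_pos, by simpa using Matrix.PosSemidef.zero⟩
  have hne : (lamSet ρ ρ).Nonempty := ⟨1, h1⟩
  have hInf : sInf (lamSet ρ ρ) = 1 :=
    le_antisymm (csInf_le ⟨1, fun _ ht => lamSet_subset hρ hρ ht⟩ h1)
      (one_le_sInf_lamSet hρ hρ hne)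
  rw [Dmax_eq, if_pos hne, hInf, Real.logb_one, EReal.coe_zero]

lemma Dmax_chain (N : Channel ι) {ρ σ σ'' : Matrix ι ι ℂ}
    (hρ : IsState ρ) (hσ : IsState σ) (hσ'' : IsState σ'')
    {l : ℝ} (hl : 1 ≤ l) (hpsd : ((l : ℂ) • σ - ρ).PosSemidef) :
    Dmax (N.map ρ) σ'' ≤ ((Real.logb 2 l : ℝ) : EReal) + Dmax (N.map σ) σ'' := by
  by_cases hne : (lamSet (N.map σ) σ'').Nonempty
  · have hNσ := channel_state N hσ
    have hNρ := channel_state N hρ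
    set μ := sInf (lamSet (N.map σ) σ'') with hμdef
    have hμmem := sInf_mem_lamSet hNσ hσ'' hne
    have hμ1 : 1 ≤ μ := one_le_sInf_lamSet hNσ hσ'' hne
    have hl0 : (0 : ℝ) < l := lt_of_lt_of_le one_pos hl
    have hμ0 : (0 : ℝ) < μ := lt_of_lt_of_le one_pos hμ1
    have hkey : l * μ ∈ lamSet (N.map ρ) σ'' := by
      refine ⟨mul_pos hl0 hμ0, ?_⟩
      have halg : ((l * μ : ℝ) : ℂ) • σ'' - N.map ρ
          = (l : ℂ) • ((μ : ℂ) • σ'' - N.map σ) + N.map ((l : ℂ) • σ - ρ) := by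
        rw [map_sub, _root_.map_smul]
        push_cast
        module
      rw [halg]
      exact (psd_smul hμmem.2 (le_of_lt hl0)).add (channel_psd N hpsd)
    have hne' : (lamSet (N.map ρ) σ'').Nonempty := ⟨_, hkey⟩
    rw [Dmax_eq, Dmax_eq, if_pos hne, if_pos hne', ← hμdef, ← EReal.coe_add,
      EReal.coe_le_coe_iff]
    have h1 : sInf (lamSet (N.map ρ) σ'') ≤ l * μ :=
      csInf_le ⟨1, fun _ ht => lamSet_subset hNρ hσ'' ht⟩ hkey
    have hpos : (0 : ℝ) < sInf (lamSet (N.map ρ) σ'') :=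
      lt_of_lt_of_le one_pos (one_le_sInf_lamSet hNρ hσ'' hne')
    have h2 : Real.logb 2 (sInf (lamSet (N.map ρ) σ'')) ≤ Real.logb 2 (l * μ) :=
      Real.logb_le_logb_of_le one_lt_two hpos h1
    rwa [Real.logb_mul (ne_of_gt hl0) (ne_of_gt hμ0)] at h2
  · rw [Dmax_eq (N.map σ) σ'', if_neg hne, EReal.coe_add_top]
    exact le_top

end Stmt10Aux

/-- for `D_max` the resource generating and increasing powers coincide and admit
the max-min characterization over free channels. -/
theorem stmt10
    (F : Set (Matrix ι ι ℂ)) (hFne : F.Nonempty) (hFstate : ∀ ρ ∈ F, IsState ρ)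
    (hFconv : Convex ℝ F) (hFclosed : IsClosed F)
    (Free : Set (Channel ι))
    (hFree : ∀ M ∈ Free, ∀ ρ ∈ F, M.map ρ ∈ F)
    (hRepl : ∀ σ ∈ F, ∃ M ∈ Free, ∀ τ : Matrix ι ι ℂ, M.map τ = τ.trace • σ)
    (N : Channel ι) :
    incPowerMax F (⇑N.map) = genPowerMax F (⇑N.map) ∧
    genPowerMax F (⇑N.map)
      = sSup ((fun ρ => sInf ((fun M : Channel ι => Dmax (N.map ρ) (M.map ρ)) '' Free)) '' F) := by
  classical
  obtain ⟨ρ₀, hρ₀⟩ := hFne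
  have hωnonneg : ∀ ρ : Matrix ι ι ℂ, IsState ρ → 0 ≤ omegaMax F ρ := by
    intro ρ hρ
    refine le_sInf ?_
    rintro x ⟨σ, hσ, rfl⟩
    exact Dmax_nonneg hρ (hFstate σ hσ)
  have hωzero : ∀ ρ ∈ F, omegaMax F ρ = 0 := by
    intro ρ hρ
    refine le_antisymm ?_ (hωnonneg ρ (hFstate ρ hρ))
    have h0 : Dmax ρ ρ = 0 := Dmax_self (hFstate ρ hρ)
    calc omegaMax F ρ ≤ Dmax ρ ρ := sInf_le ⟨ρ, hρ, rfl⟩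
      _ = 0 := h0
  constructor
  · apply le_antisymm
    · -- inc ≤ gen
      apply sSup_le
      rintro x ⟨ρ, hρstate, rfl⟩
      simp only [Set.mem_setOf_eq] at hρstate
      show omegaMax F (N.map ρ) - omegaMax F ρ ≤ genPowerMax F (⇑N.map)
      by_cases hGtop : genPowerMax F (⇑N.map) = ⊤
      · rw [hGtop]; exact le_top
      have hG0 : 0 ≤ genPowerMax F (⇑N.map) :=
        le_trans (hωnonneg _ (channel_state N (hFstate ρ₀ hρ₀))) (le_sSup ⟨ρ₀, hρ₀, rfl⟩)
      have hGbot : genPowerMax F (⇑N.map) ≠ ⊥ := fun h => by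
        rw [h] at hG0; exact absurd hG0 (by simp)
      obtain ⟨g, hg⟩ : ∃ g : ℝ, genPowerMax F (⇑N.map) = (g : EReal) :=
        ⟨(genPowerMax F (⇑N.map)).toReal, (EReal.coe_toReal hGtop hGbot).symm⟩
      by_cases hwtop : omegaMax F ρ = ⊤
      · rw [hwtop, EReal.sub_top]; exact bot_le
      have hw0 : 0 ≤ omegaMax F ρ := hωnonneg ρ hρstate
      have hwbot : omegaMax F ρ ≠ ⊥ := fun h => by
        rw [h] at hw0; exact absurd hw0 (by simp)
      obtain ⟨y, hy⟩ : ∃ y : ℝ, omegaMax F ρ = (y : EReal) :=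
        ⟨(omegaMax F ρ).toReal, (EReal.coe_toReal hwtop hwbot).symm⟩
      have key : ∀ σ ∈ F, omegaMax F (N.map ρ) ≤ Dmax ρ σ + (g : EReal) := by
        intro σ hσ
        by_cases hne : (lamSet ρ σ).Nonempty
        · have hmem := sInf_mem_lamSet hρstate (hFstate σ hσ) hne
          have h1 := one_le_sInf_lamSet hρstate (hFstate σ hσ) hne
          set l := sInf (lamSet ρ σ) with hldef
          have hstep : omegaMax F (N.map σ) ≤ (g : EReal) := by
            rw [← hg]; exact le_sSup ⟨σ, hσ, rfl⟩
          have hchain : omegaMax F (N.map ρ) - ((Real.logb 2 l : ℝ) : EReal)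
              ≤ (g : EReal) := by
            refine le_trans (le_trans ?_ (le_refl (omegaMax F (N.map σ)))) hstep
            refine le_sInf ?_
            rintro x ⟨σ'', hσ'', rfl⟩
            rw [EReal.sub_le_iff_le_add (Or.inl (EReal.coe_ne_bot _))
              (Or.inl (EReal.coe_ne_top _))]
            calc omegaMax F (N.map ρ) ≤ Dmax (N.map ρ) σ'' := sInf_le ⟨σ'', hσ'', rfl⟩
              _ ≤ ((Real.logb 2 l : ℝ) : EReal) + Dmax (N.map σ) σ'' :=
                  Dmax_chain N hρstate (hFstate σ hσ) (hFstate σ'' hσ'') h1 hmem.2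
              _ = Dmax (N.map σ) σ'' + ((Real.logb 2 l : ℝ) : EReal) := add_comm _ _
          rw [Dmax_eq ρ σ, if_pos hne, ← hldef, add_comm]
          exact (EReal.sub_le_iff_le_add (Or.inl (EReal.coe_ne_bot _))
            (Or.inl (EReal.coe_ne_top _))).mp hchain
        · rw [Dmax_eq, if_neg hne, EReal.top_add_coe]
          exact le_top
      have h2 : omegaMax F (N.map ρ) - (g : EReal) ≤ omegaMax F ρ := by
        refine le_sInf ?_
        rintro x ⟨σ, hσ, rfl⟩
        exact (EReal.sub_le_iff_le_add (Or.inl (EReal.coe_ne_bot _))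
          (Or.inl (EReal.coe_ne_top _))).mpr (key σ hσ)
      rw [hy] at h2
      have h3 : omegaMax F (N.map ρ) ≤ (y : EReal) + (g : EReal) :=
        (EReal.sub_le_iff_le_add (Or.inl (EReal.coe_ne_bot _))
          (Or.inl (EReal.coe_ne_top _))).mp h2
      rw [hy, hg]
      refine (EReal.sub_le_iff_le_add (Or.inl (EReal.coe_ne_bot _))
        (Or.inl (EReal.coe_ne_top _))).mpr ?_
      rwa [add_comm] at h3
    · -- gen ≤ inc
      apply sSup_le
      rintro x ⟨ρ, hρ, rfl⟩
      show omegaMax F (N.map ρ) ≤ incPowerMax F (⇑N.map)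
      refine le_sSup ⟨ρ, hFstate ρ hρ, ?_⟩
      show omegaMax F (N.map ρ) - omegaMax F ρ = omegaMax F (N.map ρ)
      rw [hωzero ρ hρ, sub_eq_add_neg, neg_zero, add_zero]
  · unfold genPowerMax
    congr 1
    apply Set.image_congr
    intro ρ hρ
    show omegaMax F (N.map ρ) = _
    apply le_antisymm
    · refine le_sInf ?_
      rintro x ⟨M, hM, rfl⟩
      exact sInf_le ⟨M.map ρ, hFree M hM ρ hρ, rfl⟩
    · refine le_sInf ?_
      rintro x ⟨σ, hσ, rfl⟩
      obtain ⟨M, hM, hrepl⟩ := hRepl σ hσ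
      have hMρ : M.map ρ = σ := by rw [hrepl ρ, (hFstate ρ hρ).2, one_smul]
      refine sInf_le ⟨M, hM, ?_⟩
      simp [hMρ]
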